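/- arXiv:1309.7934 — 6 statements merged into one kernel-verified Lean document; each statement's English description precedes it below -/
import Mathlib

section
/- For every n ≥ 0, the words H^n(01) and H^n(10) both have length F_{n+2}, and they agree on their first F_{n+2}−2 symbols while their last two symbols are 01 and 10 in some order (i.e., they differ exactly in the last two positions, which are swapped). -/
/-- Fibonacci substitution on finite words: H(0)=01, H(1)=0 (0 ↦ `false`, 1 ↦ `true`). -/
def Hword : List Bool → List Bool
  | [] => []
  | false :: t => false :: true :: Hword t
  | true :: t => false :: Hword t

/-- Paper-indexed Fibonacci numbers, shifted by 2: `fibP k = F_{k-2}`, so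
`fibP 0 = F_{-2} = 1`, `fibP 1 = F_{-1} = 0`, `fibP 2 = F_0 = 1`, `fibP 3 = F_1 = 1`, … -/
def fibP : ℕ → ℕ
  | 0 => 1
  | 1 => 0
  | n + 2 => fibP (n + 1) + fibP n

/-- Fibonacci substitution on infinite binary sequences. -/
def Hseq (x : ℕ → Bool) : ℕ → Bool :=
  fun n => (Hword ((List.range (n + 1)).map x)).getD n false

/-- The left shift on infinite binary sequences. -/
def shift (x : ℕ → Bool) : ℕ → Bool := fun n => x (n + 1)

lemma Hword_append (u v : List Bool) : Hword (u ++ v) = Hword u ++ Hword v := by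
  induction u with
  | nil => simp [Hword]
  | cons h t ih => cases h <;> simp [Hword, ih]

lemma Hiter_append (n : ℕ) (u v : List Bool) :
    Hword^[n] (u ++ v) = Hword^[n] u ++ Hword^[n] v := by
  induction n generalizing u v with
  | zero => simp
  | succ n ih => simp [Function.iterate_succ_apply, Hword_append, ih]

lemma Hlen (n : ℕ) : (Hword^[n] [false]).length = fibP (n + 3) ∧
    (Hword^[n] [true]).length = fibP (n + 2) := by
  induction n with
  | zero => simp [fibP]
  | succ n ih =>
    have h1 : Hword^[n+1] [false] = Hword^[n] [false] ++ Hword^[n] [true] := by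
      rw [Function.iterate_succ_apply]
      show Hword^[n] ([false] ++ [true]) = _
      exact Hiter_append n _ _
    have h2 : Hword^[n+1] [true] = Hword^[n] [false] := by
      rw [Function.iterate_succ_apply]; rfl
    constructor
    · rw [h1, List.length_append, ih.1, ih.2]; rfl
    · rw [h2, ih.1]

lemma Hkey (n : ℕ) : ∃ w a, Hword^[n] [false, true] = w ++ [a, !a] ∧
    Hword^[n] [true, false] = w ++ [!a, a] := by
  induction n with
  | zero => exact ⟨[], false, rfl, rfl⟩
  | succ n ih =>
    obtain ⟨w, a, h1, h2⟩ := ih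
    refine ⟨Hword w ++ [false], !a, ?_, ?_⟩ <;>
      rw [Function.iterate_succ_apply'] <;>
      [rw [h1]; rw [h2]] <;> cases a <;> simp [Hword_append, Hword]

/-- `H^n(01)` and `H^n(10)` have length `F_{n+2} = fibP (n+4)`, agree on the
first `F_{n+2} - 2` symbols and their last two symbols are `01` and `10` in some order. -/
theorem Hn_01_10 (n : ℕ) :
    (Hword^[n] [false, true]).length = fibP (n + 4) ∧
    (Hword^[n] [true, false]).length = fibP (n + 4) ∧
    (Hword^[n] [false, true]).take (fibP (n + 4) - 2)
      = (Hword^[n] [true, false]).take (fibP (n + 4) - 2) ∧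
    ∃ a : Bool,
      (Hword^[n] [false, true]).drop (fibP (n + 4) - 2) = [a, !a] ∧
      (Hword^[n] [true, false]).drop (fibP (n + 4) - 2) = [!a, a] := by
  obtain ⟨w, a, h1, h2⟩ := Hkey n
  have l1 : (Hword^[n] [false, true]).length = fibP (n + 4) := by
    have : ([false, true] : List Bool) = [false] ++ [true] := rfl
    rw [this, Hiter_append, List.length_append, (Hlen n).1, (Hlen n).2]; rfl
  have l2 : (Hword^[n] [true, false]).length = fibP (n + 4) := by
    have : ([true, false] : List Bool) = [true] ++ [false] := rfl
    rw [this, Hiter_append, List.length_append, (Hlen n).1, (Hlen n).2]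
    show fibP (n+2) + fibP (n+3) = fibP (n+4)
    have : fibP (n+4) = fibP (n+3) + fibP (n+2) := rfl
    omega
  have lw : w.length = fibP (n + 4) - 2 := by
    have := l1; rw [h1] at this; simp at this; omega
  refine ⟨l1, l2, ?_, a, ?_, ?_⟩
  · rw [h1, h2, ← lw, List.take_left, List.take_left]
  · rw [h1, ← lw, List.drop_left]
  · rw [h2, ← lw, List.drop_left]
end

section
/- Any infinite binary sequence starting with 0 and containing no two consecutive 1's admits a unique decomposition as a concatenation of blocks from {0 (not followed by 1), 01}; equivalently, there exists a unique infinite binary sequence y with H(y) = x, where H is the Fibonacci substitution. -/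
namespace UHP

/-- Prefix of length `m` of an infinite sequence. -/
def pref (z : ℕ → Bool) (m : ℕ) : List Bool := (List.range m).map z

lemma pref_succ (z : ℕ → Bool) (m : ℕ) : pref z (m + 1) = pref z m ++ [z m] := by
  simp [pref, List.range_succ]

lemma hword_append (l m : List Bool) : Hword (l ++ m) = Hword l ++ Hword m := by
  induction l with
  | nil => rfl
  | cons a t ih => cases a <;> simp [Hword, ih]

lemma hword_len_ge (l : List Bool) : l.length ≤ (Hword l).length := by
  induction l with
  | nil => simp [Hword]
  | cons a t ih => cases a <;> simp [Hword] <;> omega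

/-- Position of the `n`-th block in `x`. -/
def posX (x : ℕ → Bool) : ℕ → ℕ
  | 0 => 0
  | n + 1 => posX x n + (if x (posX x n + 1) then 2 else 1)

lemma posX_succ (x : ℕ → Bool) (n : ℕ) :
    posX x (n + 1) = posX x n + (if x (posX x n + 1) then 2 else 1) := rfl

/-- Candidate preimage. -/
def yx (x : ℕ → Bool) (n : ℕ) : Bool := ! x (posX x n + 1)

lemma posX_ge (x : ℕ → Bool) (m : ℕ) : m ≤ posX x m := by
  induction m with
  | zero => simp [posX]
  | succ n ih => rw [posX_succ]; split <;> omega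

lemma pref_mono (z : ℕ → Bool) {a b : ℕ} (h : a ≤ b) :
    Hword (pref z a) <+: Hword (pref z b) := by
  have h1 : pref z a = (pref z b).take a := by
    simp [pref, ← List.map_take, List.take_range, Nat.min_eq_left h]
  rw [show pref z b = (pref z b).take a ++ (pref z b).drop a from
    (List.take_append_drop a (pref z b)).symm, hword_append, ← h1]
  exact List.prefix_append _ _

lemma hseq_getD (z : ℕ → Bool) (n : ℕ) :
    Hseq z n = (Hword (pref z (n + 1))).getD n false := rfl

lemma getD_prefix {p q : List Bool} (h : p <+: q) {n : ℕ} (hn : n < p.length) :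
    p.getD n false = q.getD n false := by
  rw [List.getD_eq_getElem _ _ hn,
    List.getD_eq_getElem _ _ (lt_of_lt_of_le hn h.length_le)]
  exact h.getElem hn

lemma len_pref_lt (z : ℕ → Bool) (n : ℕ) : n < (Hword (pref z (n + 1))).length := by
  have h1 := hword_len_ge (pref z (n + 1))
  have h2 : (pref z (n + 1)).length = n + 1 := by simp [pref]
  omega

lemma elt (x z : ℕ → Bool) (hz : Hseq z = x) (m n : ℕ)
    (h : n < (Hword (pref z m)).length) :
    (Hword (pref z m)).getD n false = x n := by
  have hn1 := len_pref_lt z n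
  have hx : (Hword (pref z (n + 1))).getD n false = x n := congrFun hz n
  rcases le_total m (n + 1) with hm | hm
  · rw [getD_prefix (pref_mono z hm) h, hx]
  · rw [← getD_prefix (pref_mono z hm) hn1, hx]

lemma lenz_succ (z : ℕ → Bool) (n : ℕ) :
    (Hword (pref z (n + 1))).length
      = (Hword (pref z n)).length + (if z n then 1 else 2) := by
  rw [pref_succ, hword_append]
  cases h : z n <;> simp [Hword]

/-- Each block starts with `false`. -/
lemma block_start (x z : ℕ → Bool) (hz : Hseq z = x) (n : ℕ) :
    x ((Hword (pref z n)).length) = false := by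
  have hlen : (Hword (pref z n)).length < (Hword (pref z (n + 1))).length := by
    rw [lenz_succ]; split <;> omega
  rw [← elt x z hz (n + 1) _ hlen, pref_succ, hword_append,
    List.getD_append_right _ _ _ _ (le_refl _), Nat.sub_self]
  cases z n <;> simp [Hword]

lemma step (x z : ℕ → Bool) (hz : Hseq z = x) (n : ℕ) :
    z n = ! x ((Hword (pref z n)).length + 1) := by
  cases h : z n with
  | false =>
    have hlen : (Hword (pref z n)).length + 1 < (Hword (pref z (n + 1))).length := by
      rw [lenz_succ, h]; simp
    have hx : x ((Hword (pref z n)).length + 1) = true := by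
      rw [← elt x z hz (n + 1) _ hlen, pref_succ, hword_append,
        List.getD_append_right _ _ _ _ (by omega), h]
      simp [Hword]
    rw [hx]; rfl
  | true =>
    have hl1 : (Hword (pref z (n + 1))).length = (Hword (pref z n)).length + 1 := by
      rw [lenz_succ, h]; rfl
    have hb := block_start x z hz (n + 1)
    rw [hl1] at hb
    rw [hb]; rfl

lemma lenz_eq_posX (x z : ℕ → Bool) (hz : Hseq z = x) (n : ℕ) :
    (Hword (pref z n)).length = posX x n := by
  induction n with
  | zero => simp [pref, Hword, posX]
  | succ n ih =>
    rw [lenz_succ, ih, step x z hz n, ih, posX_succ]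
    cases hxx : x (posX x n + 1) <;> simp [hxx]

lemma uniq (x z : ℕ → Bool) (hz : Hseq z = x) : z = yx x := by
  funext n
  rw [step x z hz n, lenz_eq_posX x z hz n, yx]

lemma exists_image (x : ℕ → Bool) (h0 : x 0 = false)
    (h11 : ∀ i, ¬(x i = true ∧ x (i + 1) = true)) (m : ℕ) :
    Hword (pref (yx x) m) = (List.range (posX x m)).map x ∧ x (posX x m) = false := by
  induction m with
  | zero => exact ⟨rfl, h0⟩
  | succ n ih =>
    obtain ⟨him, hf⟩ := ih
    rw [pref_succ, hword_append, him, posX_succ]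
    have hy : yx x n = ! x (posX x n + 1) := rfl
    cases hxp : x (posX x n + 1) with
    | true =>
      rw [if_pos rfl]
      constructor
      · rw [show posX x n + 2 = (posX x n + 1) + 1 from rfl, List.range_succ, List.range_succ,
          List.map_append, List.map_append, List.append_assoc, hy, hxp]
        simp [Hword, hf, hxp]
      · cases hq : x (posX x n + 2) with
        | false => rfl
        | true => exact absurd ⟨hxp, hq⟩ (h11 (posX x n + 1))
    | false =>
      rw [if_neg (by simp)]
      refine ⟨?_, hxp⟩
      rw [List.range_succ, List.map_append, hy, hxp]
      simp [Hword, hf]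

end UHP

/-- any infinite binary sequence starting with `0` and containing no two
consecutive `1`'s has a unique preimage under the Fibonacci substitution. -/
theorem unique_H_preimage (x : ℕ → Bool) (h0 : x 0 = false)
    (h11 : ∀ i, ¬(x i = true ∧ x (i + 1) = true)) :
    ∃! y : ℕ → Bool, Hseq y = x := by
  refine ⟨UHP.yx x, ?_, fun z hz => UHP.uniq x z hz⟩
  funext n
  have him := (UHP.exists_image x h0 h11 (n + 1)).1
  have hlt : n < UHP.posX x (n + 1) :=
    lt_of_lt_of_le (Nat.lt_succ_self n) (UHP.posX_ge x (n + 1))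
  rw [UHP.hseq_getD, him, List.getD_eq_getElem _ _ (by simpa using hlt)]
  simp
end

section
/- If x ∉ 𝕂 and y ∈ 𝕂 realizes the distance d(x,𝕂) = d(x,y) (i.e., y has the longest common prefix with x among all points of 𝕂), then for every n ≥ 0, H^n(y) realizes the distance from H^n(x) to 𝕂: d(H^n(x),𝕂) = d(H^n(x),H^n(y)). -/
namespace FibAux

def pre (x : ℕ → Bool) (m : ℕ) : List Bool := (List.range m).map x

def wt (b : Bool) : ℕ := if b then 1 else 2

lemma Hword_append (a b : List Bool) : Hword (a ++ b) = Hword a ++ Hword b := by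
  induction a with
  | nil => rfl
  | cons h t ih => cases h <;> simp [Hword, ih]

lemma length_le_Hword (l : List Bool) : l.length ≤ (Hword l).length := by
  induction l with
  | nil => simp [Hword]
  | cons h t ih => cases h <;> simp [Hword] <;> omega

lemma pre_length (x : ℕ → Bool) (m : ℕ) : (pre x m).length = m := by simp [pre]

lemma pre_succ (x : ℕ → Bool) (m : ℕ) : pre x (m+1) = pre x m ++ [x m] := by
  simp [pre, List.range_succ]

lemma pre_cons (x : ℕ → Bool) (m : ℕ) : pre x (m+1) = x 0 :: pre (shift x) m := by
  simp [pre, List.range_succ_eq_map, List.map_map]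
  exact fun a _ => rfl

lemma pre_add (x : ℕ → Bool) (a b : ℕ) :
    pre x (a + b) = pre x a ++ (List.range b).map (fun i => x (a + i)) := by
  simp [pre, List.range_add, List.map_map]

lemma Hseq_def (x : ℕ → Bool) (n : ℕ) : Hseq x n = (Hword (pre x (n+1))).getD n false := rfl

lemma stability {m k : ℕ} {x : ℕ → Bool} (h : k < (Hword (pre x m)).length) :
    (Hword (pre x m)).getD k false = Hseq x k := by
  rcases le_or_gt (k+1) m with hm | hm
  · obtain ⟨r, rfl⟩ := Nat.exists_eq_add_of_le hm
    rw [pre_add, Hword_append, List.getD_append _ _ _ _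
      (lt_of_lt_of_le (Nat.lt_succ_self k) (by simpa [pre_length] using length_le_Hword (pre x (k+1)))),
      Hseq_def]
  · have hm' : m ≤ k + 1 := by omega
    obtain ⟨r, hr⟩ := Nat.exists_eq_add_of_le hm'
    rw [Hseq_def, hr, pre_add, Hword_append, List.getD_append _ _ _ _ h]

def Lf (x : ℕ → Bool) (m : ℕ) : ℕ := (Hword (pre x m)).length

lemma Lf_zero (x : ℕ → Bool) : Lf x 0 = 0 := rfl

lemma Lf_cons (x : ℕ → Bool) (m : ℕ) : Lf x (m+1) = wt (x 0) + Lf (shift x) m := by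
  unfold Lf
  rw [pre_cons]
  cases h : x 0 <;> simp [Hword, wt] <;> omega

lemma le_Lf (x : ℕ → Bool) (m : ℕ) : m ≤ Lf x m := by
  have := length_le_Hword (pre x m); rwa [pre_length] at this

lemma Hseq_shift (x : ℕ → Bool) (k : ℕ) : Hseq x (wt (x 0) + k) = Hseq (shift x) k := by
  cases h : x 0 with
  | false =>
    have hwt : wt false + k = k + 2 := by simp [wt]; omega
    rw [hwt, Hseq_def]
    have hp : pre x (k + 2 + 1) = x 0 :: pre (shift x) (k + 2) := pre_cons x (k+2)
    rw [hp, h]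
    rw [show Hword (false :: pre (shift x) (k+2)) = false :: true :: Hword (pre (shift x) (k+2)) from rfl,
      List.getD_cons_succ, List.getD_cons_succ]
    exact stability (by
      have := length_le_Hword (pre (shift x) (k+2))
      rw [pre_length] at this
      omega)
  | true =>
    have hwt : wt true + k = k + 1 := by simp [wt]; omega
    rw [hwt, Hseq_def]
    have hp : pre x (k + 1 + 1) = x 0 :: pre (shift x) (k + 1) := pre_cons x (k+1)
    rw [hp, h]
    rw [show Hword (true :: pre (shift x) (k+1)) = false :: Hword (pre (shift x) (k+1)) from rfl,
      List.getD_cons_succ]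
    rfl

lemma Hseq_zero (x : ℕ → Bool) : Hseq x 0 = false := by
  rw [Hseq_def]
  have : pre x 1 = [x 0] := by simp [pre, List.range_succ]
  rw [this]
  cases x 0 <;> rfl

lemma Hseq_one (x : ℕ → Bool) : Hseq x 1 = !(x 0) := by
  cases h : x 0 with
  | false =>
    rw [Hseq_def, pre_cons, h]
    rfl
  | true =>
    have h1 := Hseq_shift x 0
    rw [h] at h1
    simp only [wt, if_true] at h1
    simpa [Hseq_zero] using h1

lemma shift_iter (m : ℕ) (x : ℕ → Bool) (k : ℕ) : shift^[m] x k = x (k + m) := by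
  induction m generalizing x k with
  | zero => rfl
  | succ m ih =>
    rw [Function.iterate_succ_apply, ih]
    show x (k + m + 1) = _
    ring_nf

lemma Hseq_Lf (m : ℕ) (x : ℕ → Bool) (k : ℕ) :
    Hseq x (Lf x m + k) = Hseq (shift^[m] x) k := by
  induction m generalizing x with
  | zero => simp [Lf_zero]
  | succ m ih =>
    rw [Lf_cons, add_assoc, Hseq_shift, ih, Function.iterate_succ_apply]

lemma pre_eq {x y : ℕ → Bool} {m : ℕ} (h : ∀ i < m, x i = y i) : pre x m = pre y m := by
  unfold pre
  exact List.map_congr_left (fun a ha => h a (List.mem_range.mp ha))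

lemma forward {x y : ℕ → Bool} {m : ℕ} (h : ∀ i < m, x i = y i) (k : ℕ) (hk : k < Lf x m) :
    Hseq x k = Hseq y k := by
  have hp := pre_eq h
  rw [← stability (show k < (Hword (pre x m)).length from hk), hp,
    stability (show k < (Hword (pre y m)).length from by rw [← hp]; exact hk)]

lemma backward : ∀ m : ℕ, ∀ x y : ℕ → Bool,
    (∀ k < Lf x m + 2, Hseq x k = Hseq y k) → ∀ i ≤ m, x i = y i := by
  intro m
  induction m with
  | zero =>
    intro x y h i hi
    interval_cases i
    have h1 := h 1 (by omega)
    rw [Hseq_one, Hseq_one] at h1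
    simpa using h1
  | succ m ih =>
    intro x y h i hi
    have h0 : x 0 = y 0 := by
      have h1 := h 1 (by omega)
      rw [Hseq_one, Hseq_one] at h1
      simpa using h1
    have htail : ∀ i ≤ m, shift x i = shift y i := by
      apply ih
      intro k hk
      have h1 : Hseq x (wt (x 0) + k) = Hseq y (wt (x 0) + k) := by
        apply h
        rw [Lf_cons]
        omega
      rw [Hseq_shift] at h1
      rw [h0] at h1
      rw [Hseq_shift] at h1
      exact h1
    match i, hi with
    | 0, _ => exact h0
    | (j+1), hj => exact htail j (by omega)

lemma Hseq_inj {x y : ℕ → Bool} (h : ∀ k, Hseq x k = Hseq y k) : x = y :=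
  funext fun i => backward i x y (fun k _ => h k) i le_rfl

end FibAux
namespace FibAux

lemma continuous_shift : Continuous shift := continuous_pi fun n => continuous_apply (n+1)

lemma Hseq_depends {x y : ℕ → Bool} {n : ℕ} (h : ∀ i ≤ n, x i = y i) : Hseq x n = Hseq y n := by
  rw [Hseq_def, Hseq_def, pre_eq (fun i hi => h i (by omega))]

lemma continuous_Hseq : Continuous Hseq := by
  apply continuous_pi
  intro n
  have key : (fun x => Hseq x n) =
      (fun f : Fin (n+1) → Bool => Hseq (fun i => if h : i < n+1 then f ⟨i, h⟩ else false) n) ∘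
      (fun x (i : Fin (n+1)) => x i.val) := by
    funext x
    apply Hseq_depends
    intro i hi
    simp [Nat.lt_succ_of_le hi]
  rw [key]
  exact continuous_of_discreteTopology.comp (continuous_pi fun i => continuous_apply i.val)

lemma Hseq_shift_fun (u : ℕ → Bool) : Hseq (shift u) = shift^[wt (u 0)] (Hseq u) := by
  funext k
  rw [shift_iter, Nat.add_comm, Hseq_shift]

section K

variable {ρ : ℕ → Bool} {K : Set (ℕ → Bool)}

lemma orbit_mem (hK : K = closure (Set.range fun n => shift^[n] ρ)) (j : ℕ) : shift^[j] ρ ∈ K := by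
  rw [hK]; exact subset_closure ⟨j, rfl⟩

lemma shift_mem (hK : K = closure (Set.range fun n => shift^[n] ρ)) {z : ℕ → Bool} (hz : z ∈ K) : shift z ∈ K := by
  rw [hK] at hz ⊢
  have h1 : shift z ∈ closure (shift '' Set.range fun n => shift^[n] ρ) :=
    image_closure_subset_closure_image continuous_shift ⟨z, hz, rfl⟩
  refine closure_mono ?_ h1
  rintro _ ⟨_, ⟨n, rfl⟩, rfl⟩
  exact ⟨n+1, by simp [Function.iterate_succ_apply']⟩

lemma HseqK_mem (hρ : Hseq ρ = ρ) (hK : K = closure (Set.range fun n => shift^[n] ρ)) {z : ℕ → Bool} (hz : z ∈ K) : Hseq z ∈ K := by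
  have horb : ∀ n : ℕ, ∃ j, Hseq (shift^[n] ρ) = shift^[j] ρ := by
    intro n
    induction n with
    | zero => exact ⟨0, by simpa using hρ⟩
    | succ n ih =>
      obtain ⟨j, hj⟩ := ih
      refine ⟨wt ((shift^[n] ρ) 0) + j, ?_⟩
      rw [Function.iterate_succ_apply', Hseq_shift_fun, hj, ← Function.iterate_add_apply]
  rw [hK] at hz ⊢
  have h1 : Hseq z ∈ closure (Hseq '' Set.range fun n => shift^[n] ρ) :=
    image_closure_subset_closure_image continuous_Hseq ⟨z, hz, rfl⟩
  refine closure_mono ?_ h1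
  rintro _ ⟨_, ⟨n, rfl⟩, rfl⟩
  obtain ⟨j, hj⟩ := horb n
  exact ⟨j, hj.symm⟩

lemma K_structure (hρ : Hseq ρ = ρ) (hK : K = closure (Set.range fun n => shift^[n] ρ)) {z : ℕ → Bool} (hz : z ∈ K) :
    ∃ w ∈ K, z = Hseq w ∨ z = shift (Hseq w) := by
  have hKcomp : IsCompact K := by rw [hK]; exact isClosed_closure.isCompact
  set S : Set (ℕ → Bool) := (Hseq '' K) ∪ (shift '' (Hseq '' K)) with hS
  have hSclosed : IsClosed S :=
    ((hKcomp.image continuous_Hseq).union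
      ((hKcomp.image continuous_Hseq).image continuous_shift)).isClosed
  have horb : ∀ n : ℕ, ∃ j, shift^[n] ρ = Hseq (shift^[j] ρ) ∨
      shift^[n] ρ = shift (Hseq (shift^[j] ρ)) := by
    intro n
    induction n with
    | zero => exact ⟨0, Or.inl (by simpa using hρ.symm)⟩
    | succ n ih =>
      obtain ⟨j, hj | hj⟩ := ih
      · exact ⟨j, Or.inr (by rw [Function.iterate_succ_apply', hj])⟩
      · cases hw0 : (shift^[j] ρ) 0 with
        | false =>
          refine ⟨j+1, Or.inl ?_⟩
          rw [Function.iterate_succ_apply' shift n ρ, hj,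
            Function.iterate_succ_apply' shift j ρ, Hseq_shift_fun, hw0]
          rfl
        | true =>
          refine ⟨j+1, Or.inr ?_⟩
          rw [Function.iterate_succ_apply' shift n ρ, hj,
            Function.iterate_succ_apply' shift j ρ, Hseq_shift_fun, hw0]
          rfl
  have hOS : (Set.range fun n => shift^[n] ρ) ⊆ S := by
    rintro _ ⟨n, rfl⟩
    obtain ⟨j, hj | hj⟩ := horb n
    · exact Or.inl ⟨shift^[j] ρ, orbit_mem hK j, hj.symm⟩
    · exact Or.inr ⟨Hseq (shift^[j] ρ), ⟨shift^[j] ρ, orbit_mem hK j, rfl⟩, hj.symm⟩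
  have hzS : z ∈ S := by
    rw [hK] at hz
    exact closure_minimal hOS hSclosed hz
  rcases hzS with ⟨w, hw, hwz⟩ | ⟨_, ⟨w, hw, rfl⟩, hwz⟩
  · exact ⟨w, hw, Or.inl hwz.symm⟩
  · exact ⟨w, hw, Or.inr hwz.symm⟩

lemma HseqX_notMem (hρ : Hseq ρ = ρ) (hK : K = closure (Set.range fun n => shift^[n] ρ)) {x : ℕ → Bool} (hx : x ∉ K) : Hseq x ∉ K := by
  intro hmem
  obtain ⟨w, hw, hc | hc⟩ := K_structure hρ hK hmem
  · exact hx (by rw [Hseq_inj (fun k => congrFun hc k)]; exact hw)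
  · have h0 := congrFun hc 0
    rw [Hseq_zero] at h0
    have h0' : false = !(w 0) := h0.trans (Hseq_one w)
    have hw0 : w 0 = true := by revert h0'; cases w 0 <;> simp
    have hfun : Hseq x = Hseq (shift w) := by
      rw [hc, Hseq_shift_fun, hw0]
      rfl
    exact hx (by rw [Hseq_inj (fun k => congrFun hfun k)]; exact shift_mem hK hw)

lemma step (hρ : Hseq ρ = ρ) (hK : K = closure (Set.range fun n => shift^[n] ρ)) {x y : ℕ → Bool} (hx : x ∉ K) (hy : y ∈ K)
    (hbest : ∀ z ∈ K, ∀ m : ℕ, (∀ i < m, x i = z i) → ∀ i < m, x i = y i) :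
    Hseq x ∉ K ∧ Hseq y ∈ K ∧
      ∀ z ∈ K, ∀ m : ℕ, (∀ i < m, Hseq x i = z i) → ∀ i < m, Hseq x i = Hseq y i := by
  classical
  refine ⟨HseqX_notMem hρ hK hx, HseqK_mem hρ hK hy, ?_⟩
  have hxy : x ≠ y := fun h => hx (h ▸ hy)
  have hex : ∃ i, x i ≠ y i := by
    by_contra h
    push_neg at h
    exact hxy (funext h)
  set m0 := Nat.find hex with hm0
  have hne0 : x m0 ≠ y m0 := Nat.find_spec hex
  have hag : ∀ i < m0, x i = y i := fun i hi => not_not.mp (Nat.find_min hex hi)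
  set L := Lf x m0 with hL
  have hLy : Lf y m0 = L := by rw [hL]; unfold Lf; rw [pre_eq hag]
  have key : ∀ w ∈ K, ¬ (∀ i < L + 2, Hseq x i = Hseq w i) := by
    intro w hw hagg
    have hb := backward m0 x w (fun k hk => hagg k hk)
    have hby := hbest w hw (m0+1) (fun i hi => hb i (by omega))
    exact hne0 (hby m0 (by omega))
  have keyz : ∀ z ∈ K, ¬ (∀ i < L + 2, Hseq x i = z i) := by
    intro z hz hagg
    obtain ⟨w, hw, hc | hc⟩ := K_structure hρ hK hz
    · exact key w hw (by rw [← hc]; exact hagg)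
    · have h0 := hagg 0 (by omega)
      rw [Hseq_zero, hc] at h0
      have h0' : false = !(w 0) := h0.trans (Hseq_one w)
      have hw0 : w 0 = true := by revert h0'; cases w 0 <;> simp
      have hz' : z = Hseq (shift w) := by
        rw [hc, Hseq_shift_fun, hw0]
        rfl
      exact key (shift w) (shift_mem hK hw) (by rw [← hz']; exact hagg)
  have hxyag : ∀ k < L + 1, Hseq x k = Hseq y k := by
    intro k hk
    rcases Nat.lt_or_ge k L with h | h
    · exact forward hag k h
    · have hkL : k = L := by omega
      subst hkL
      have h1 : Hseq x L = false := by
        have := Hseq_Lf m0 x 0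
        rw [Hseq_zero] at this
        simpa using this
      have h2 : Hseq y L = false := by
        have := Hseq_Lf m0 y 0
        rw [Hseq_zero, hLy] at this
        simpa using this
      rw [h1, h2]
  intro z hz m hagz i him
  have hmle : m ≤ L + 1 := by
    by_contra hcon
    exact keyz z hz (fun j hj => hagz j (by omega))
  exact hxyag i (by omega)

end K

end FibAux

/-- if `y ∈ 𝕂` realizes the distance from `x ∉ 𝕂` to `𝕂` (i.e. `y` has the
longest common prefix with `x` among points of `𝕂`), then for every `n ≥ 0`, `H^n(y) ∈ 𝕂`
realizes the distance from `H^n(x)` to `𝕂`. -/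
theorem Hn_realizes_distance (ρ : ℕ → Bool) (hρ : Hseq ρ = ρ)
    (K : Set (ℕ → Bool)) (hK : K = closure (Set.range fun n => shift^[n] ρ))
    (x y : ℕ → Bool) (hx : x ∉ K) (hy : y ∈ K)
    (hbest : ∀ z ∈ K, ∀ m : ℕ, (∀ i < m, x i = z i) → ∀ i < m, x i = y i)
    (n : ℕ) :
    Hseq^[n] y ∈ K ∧
    ∀ z ∈ K, ∀ m : ℕ, (∀ i < m, Hseq^[n] x i = z i) →
      ∀ i < m, Hseq^[n] x i = Hseq^[n] y i := by
  have main : ∀ n : ℕ, Hseq^[n] x ∉ K ∧ Hseq^[n] y ∈ K ∧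
      ∀ z ∈ K, ∀ m : ℕ, (∀ i < m, Hseq^[n] x i = z i) →
        ∀ i < m, Hseq^[n] x i = Hseq^[n] y i := by
    intro n
    induction n with
    | zero => exact ⟨hx, hy, hbest⟩
    | succ n ih =>
      obtain ⟨h1, h2, h3⟩ := ih
      have hs := FibAux.step hρ hK h1 h2 h3
      rw [Function.iterate_succ_apply' Hseq n x, Function.iterate_succ_apply' Hseq n y]
      exact hs
  exact ⟨(main n).2.1, (main n).2.2⟩
end

section
/- Define Ṽ on {0,1}^ℕ ∖ 𝕂 by Ṽ(x) = log((κ̃_0(x) + κ̃_1(x)/γ + γ)/(κ̃_0(x) + κ̃_1(x)/γ + γ − 1)) if x starts with 0, and Ṽ(x) = log((γκ̃_0(x) + κ̃_1(x) + γ²)/(γκ̃_0(x) + κ̃_1(x) + γ² − 1)) if x starts with 1, where κ̃_a(x) counts the symbols a in the maximal prefix of x common with 𝕂. Suppose x starts with 0, so H(x) starts with 01, and that κ̃_0(H(x)) = κ̃_0(x)+κ̃_1(x)+1, κ̃_1(H(x)) = κ̃_0(x), κ̃_0(σH(x)) = κ̃_0(x)+κ̃_1(x), κ̃_1(σH(x))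 = κ̃_0(x). Then Ṽ(H(x)) + Ṽ(σ(H(x))) = Ṽ(x). -/
/-- the fixed-point identity `Ṽ(H(x)) + Ṽ(σ(H(x))) = Ṽ(x)` on the cylinder
`[0]`, as a real-number identity with `n = κ̃₀(x)`, `m = κ̃₁(x)`. -/
theorem fixedpoint_identity_cyl0 (γ : ℝ) (hγ : γ = (1 + Real.sqrt 5) / 2)
    (n m : ℝ) (hn : 0 ≤ n) (hm : 0 ≤ m) :
    Real.log ((n + m + 1 + n / γ + γ) / (n + m + 1 + n / γ + γ - 1)) +
      Real.log ((γ * (n + m) + n + γ ^ 2) / (γ * (n + m) + n + γ ^ 2 - 1)) =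
      Real.log ((n + m / γ + γ) / (n + m / γ + γ - 1)) := by
  have hs : Real.sqrt 5 ^ 2 = 5 := Real.sq_sqrt (by norm_num)
  have hs1 : 1 < Real.sqrt 5 := by nlinarith [Real.sqrt_nonneg 5]
  have hγ1 : 1 < γ := by rw [hγ]; linarith
  have hγ0 : 0 < γ := by linarith
  have hγne : γ ≠ 0 := ne_of_gt hγ0
  have hγ2 : γ ^ 2 = γ + 1 := by rw [hγ]; field_simp; nlinarith
  have hnγ : 0 ≤ n / γ := by positivity
  have hmγ : 0 ≤ m / γ := by positivity
  have hA : 0 < n + m + 1 + n / γ + γ - 1 := by linarith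
  have hA0 : 0 < n + m + 1 + n / γ + γ := by linarith
  have hC : 0 < n + m / γ + γ - 1 := by linarith
  have hC0 : 0 < n + m / γ + γ := by linarith
  have hB : 0 < γ * (n + m) + n + γ ^ 2 - 1 := by nlinarith
  have hB0 : 0 < γ * (n + m) + n + γ ^ 2 := by linarith
  have e2 : γ * (n + m) + n + γ ^ 2 = γ * (n + m + 1 + n / γ + γ - 1) := by
    field_simp; ring
  have e3 : γ * (n + m) + n + γ ^ 2 - 1 = γ ^ 2 * (n + m / γ + γ - 1) := by
    field_simp; linear_combination (1 - γ - n) * hγ2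
  have e1 : n + m + 1 + n / γ + γ = γ * (n + m / γ + γ) := by
    field_simp; linear_combination (-(n + γ)) * hγ2
  rw [← Real.log_mul (by positivity) (by positivity)]
  congr 1
  rw [div_mul_div_comm, e3, e2, e1]
  have h1 : 0 < γ * (n + m / γ + γ) - 1 := by nlinarith
  rw [div_eq_div_iff (by positivity) (by positivity)]
  ring
end

section
/- For all nonnegative reals n, m and γ = (1+√5)/2: log((γ(n+m+1) + n + γ²)/(γ(n+m+1) + n + γ² − γ)) = log((γn + m + γ²)/(γn + m + γ² − 1)). (This is the fixed-point identity ℛṼ = Ṽ on the cylinder [1].) -/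
/-- the fixed-point identity `ℛṼ = Ṽ` on the cylinder `[1]`. -/
theorem fixedpoint_identity_cyl1 (γ : ℝ) (hγ : γ = (1 + Real.sqrt 5) / 2)
    (n m : ℝ) (hn : 0 ≤ n) (hm : 0 ≤ m) :
    Real.log ((γ * (n + m + 1) + n + γ ^ 2) / (γ * (n + m + 1) + n + γ ^ 2 - γ)) =
      Real.log ((γ * n + m + γ ^ 2) / (γ * n + m + γ ^ 2 - 1)) := by
  have h5 : Real.sqrt 5 ^ 2 = 5 := Real.sq_sqrt (by norm_num)
  have hs : (1:ℝ) ≤ Real.sqrt 5 := by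
    nlinarith [Real.sqrt_nonneg 5]
  have hγ1 : 1 ≤ γ := by rw [hγ]; linarith
  have hγ2 : γ ^ 2 = γ + 1 := by rw [hγ]; field_simp; nlinarith
  have hd : γ * n + m + γ ^ 2 - 1 = γ * n + m + γ := by rw [hγ2]; ring
  have hdpos : 0 < γ * n + m + γ ^ 2 - 1 := by
    rw [hd]; nlinarith
  have hnum : γ * (n + m + 1) + n + γ ^ 2 = γ * (γ * n + m + γ ^ 2) := by
    nlinarith [hγ2]
  have hden : γ * (n + m + 1) + n + γ ^ 2 - γ = γ * (γ * n + m + γ ^ 2 - 1) := by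
    nlinarith [hγ2]
  rw [hden, hnum, mul_div_mul_left _ _ (by linarith : γ ≠ 0)]
end

section
/- Let 0 < ζ < 1, ξ ≤ 1 arbitrary positive real with ξ ≤ 1, and K = 1/(1−ζ). Define the (n+1)×n matrix D_n by (D_n)_{i,j} = ((j−1)!/(i−1)!)·ζ^{j−i+1} if i ≤ j, (D_n)_{i,j} = ξ/j if i = j+1, and 0 if i > j+1, for 1 ≤ i ≤ n+1, 1 ≤ j ≤ n. Then, entrywise, D_n applied to the vector (K^{n−1}/0!, K^{n−1}/1!, …, K^{n−1}/(n−1)!)ᵀ is ≤ the vector (K^n/0!, K^n/1!, …, K^n/n!)ᵀ, provided ξ ≤ 1. -/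
lemma shiftSum (n i : ℕ) (f : ℕ → ℝ) :
    ∑ k ∈ Finset.range n, (if i ≤ k then f (k - i) else 0)
      = ∑ d ∈ Finset.range (n - i), f d := by
  induction n with
  | zero => simp
  | succ m ih =>
    rw [Finset.sum_range_succ, ih]
    by_cases h : i ≤ m
    · rw [if_pos h]
      have : m + 1 - i = (m - i) + 1 := by omega
      rw [this, Finset.sum_range_succ]
    · rw [if_neg h]
      have h1 : m + 1 - i = 0 := by omega
      have h2 : m - i = 0 := by omega
      rw [h1, h2, add_zero]

/-- the matrix `D_n` maps the vector `(K^{n-1}/j!)_j` entrywise below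
the vector `(K^n/i!)_i`, where `K = 1/(1-ζ)`, `0 < ζ < 1`, `0 < ξ ≤ 1`.
(Indices are 0-based: row `i`, column `j` correspond to the paper's `i+1`, `j+1`.) -/
theorem matrix_vector_bound (n : ℕ) (ζ ξ : ℝ) (hζ0 : 0 < ζ) (hζ1 : ζ < 1)
    (hξ0 : 0 < ξ) (hξ1 : ξ ≤ 1) (K : ℝ) (hK : K = 1 / (1 - ζ)) :
    let D : Matrix (Fin (n + 1)) (Fin n) ℝ := fun i j =>
      if (i : ℕ) ≤ (j : ℕ) then
        ((j : ℕ).factorial : ℝ) / ((i : ℕ).factorial) * ζ ^ ((j : ℕ) - (i : ℕ) + 1)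
      else if (i : ℕ) = (j : ℕ) + 1 then ξ / ((j : ℕ) + 1)
      else 0
    ∀ i : Fin (n + 1),
      D.mulVec (fun j : Fin n => K ^ (n - 1) / ((j : ℕ).factorial : ℝ)) i
        ≤ K ^ n / ((i : ℕ).factorial : ℝ) := by
  intro D i
  have hz : (0:ℝ) < 1 - ζ := by linarith
  have hK0 : (0:ℝ) < K := by rw [hK]; positivity
  have hKζ : K = 1 + ζ * K := by
    rw [hK]; field_simp; ring
  have hmv : D.mulVec (fun j : Fin n => K ^ (n - 1) / ((j : ℕ).factorial : ℝ)) i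
      = ∑ k ∈ Finset.range n,
        ((if (i:ℕ) ≤ k then ((k.factorial : ℝ)) / (((i:ℕ).factorial)) * ζ ^ (k - (i:ℕ) + 1)
          else if (i:ℕ) = k + 1 then ξ / ((k:ℝ) + 1) else 0)
          * (K ^ (n-1) / (k.factorial : ℝ))) := by
    simp only [Matrix.mulVec, dotProduct, D]
    exact Fin.sum_univ_eq_sum_range (fun k =>
      (if (i:ℕ) ≤ k then ((k.factorial : ℝ)) / (((i:ℕ).factorial)) * ζ ^ (k - (i:ℕ) + 1)
        else if (i:ℕ) = k + 1 then ξ / ((k:ℝ) + 1) else 0)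
        * (K ^ (n-1) / (k.factorial : ℝ))) n
  rw [hmv]
  -- pointwise identity
  have hpt : ∀ k ∈ Finset.range n,
      ((if (i:ℕ) ≤ k then ((k.factorial : ℝ)) / (((i:ℕ).factorial)) * ζ ^ (k - (i:ℕ) + 1)
          else if (i:ℕ) = k + 1 then ξ / ((k:ℝ) + 1) else 0)
          * (K ^ (n-1) / (k.factorial : ℝ)))
      = (K ^ (n-1) / ((i:ℕ).factorial : ℝ)) *
          ((if (i:ℕ) ≤ k then ζ ^ (k - (i:ℕ) + 1) else 0)
           + (if (i:ℕ) = k + 1 then ξ else 0)) := by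
    intro k _
    have hkf : ((k.factorial : ℝ)) ≠ 0 := Nat.cast_ne_zero.mpr (Nat.factorial_ne_zero k)
    have hif : (((i:ℕ).factorial : ℝ)) ≠ 0 := Nat.cast_ne_zero.mpr (Nat.factorial_ne_zero _)
    by_cases h1 : (i:ℕ) ≤ k
    · have h2 : ¬ ((i:ℕ) = k + 1) := by omega
      rw [if_pos h1, if_pos h1, if_neg h2, add_zero]
      field_simp
    · rw [if_neg h1, if_neg h1, zero_add]
      by_cases h2 : (i:ℕ) = k + 1
      · rw [if_pos h2, if_pos h2]
        have : ((i:ℕ).factorial : ℝ) = ((k:ℝ) + 1) * (k.factorial : ℝ) := by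
          rw [h2, Nat.factorial_succ]
          push_cast; ring
        rw [this]
        have hk1 : ((k:ℝ) + 1) ≠ 0 := by positivity
        field_simp
      · rw [if_neg h2, if_neg h2, zero_mul, mul_zero]
  refine le_trans (le_of_eq (Finset.sum_congr rfl hpt)) ?_
  rw [← Finset.mul_sum (Finset.range n) (fun k => (if (i:ℕ) ≤ k then ζ ^ (k - (i:ℕ) + 1) else 0) + (if (i:ℕ) = k + 1 then ξ else 0)) (K ^ (n-1) / ((i:ℕ).factorial : ℝ))]
  rw [Finset.sum_add_distrib]
  -- bound the geometric part
  have hgeom : ∑ k ∈ Finset.range n, (if (i:ℕ) ≤ k then ζ ^ (k - (i:ℕ) + 1) else 0)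
      ≤ ζ * K := by
    rw [shiftSum n (i:ℕ) (fun d => ζ ^ (d + 1))]
    have : ∀ d, ζ ^ (d + 1) = ζ * ζ ^ d := fun d => by ring
    calc ∑ d ∈ Finset.range (n - (i:ℕ)), ζ ^ (d + 1)
        = ζ * ∑ d ∈ Finset.range (n - (i:ℕ)), ζ ^ d := by
          rw [Finset.mul_sum]; exact Finset.sum_congr rfl fun d _ => by ring
      _ ≤ ζ * K := by
          apply mul_le_mul_of_nonneg_left _ hζ0.le
          rw [geom_sum_eq (by intro h; linarith : ζ ≠ 1), hK]
          have heq : (ζ ^ (n-(i:ℕ)) - 1)/(ζ - 1) = (1 - ζ ^ (n-(i:ℕ)))/(1-ζ) := by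
            rw [← neg_div_neg_eq]; ring_nf
          rw [heq]
          have hp : (0:ℝ) ≤ ζ ^ (n - (i:ℕ)) := by positivity
          gcongr
          linarith
  -- bound the ξ part
  have hxi : ∑ k ∈ Finset.range n, (if (i:ℕ) = k + 1 then ξ else 0) ≤ ξ := by
    rcases Nat.eq_zero_or_pos (i:ℕ) with h0 | h0
    · rw [Finset.sum_eq_zero (fun k _ => by rw [if_neg (by omega)])]
      exact hξ0.le
    · obtain ⟨m, hm⟩ : ∃ m, (i:ℕ) = m + 1 := ⟨(i:ℕ) - 1, by omega⟩
      have : ∑ k ∈ Finset.range n, (if (i:ℕ) = k + 1 then ξ else 0)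
          = ∑ k ∈ Finset.range n, (if k = m then ξ else 0) := by
        refine Finset.sum_congr rfl fun k _ => ?_
        by_cases h : k = m
        · rw [if_pos h, if_pos (by omega)]
        · rw [if_neg h, if_neg (by omega)]
      rw [this, Finset.sum_ite_eq' (Finset.range n) m (fun _ => ξ)]
      split_ifs
      · exact le_refl ξ
      · exact hξ0.le
  -- combine
  rcases Nat.eq_zero_or_pos n with hn0 | hn0
  · subst hn0
    simp only [Finset.range_zero, Finset.sum_empty, add_zero, mul_zero, pow_zero]
    positivity
  have hsum : (∑ k ∈ Finset.range n, (if (i:ℕ) ≤ k then ζ ^ (k - (i:ℕ) + 1) else 0))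
      + (∑ k ∈ Finset.range n, (if (i:ℕ) = k + 1 then ξ else 0)) ≤ K := by
    calc _ ≤ ζ * K + ξ := add_le_add hgeom hxi
      _ ≤ ζ * K + 1 := by linarith
      _ = K := by linarith [hKζ]
  have hC : (0:ℝ) ≤ K ^ (n-1) / ((i:ℕ).factorial : ℝ) := by positivity
  calc K ^ (n-1) / ((i:ℕ).factorial : ℝ) * _ ≤ K ^ (n-1) / ((i:ℕ).factorial : ℝ) * K :=
        mul_le_mul_of_nonneg_left hsum hC
    _ = K ^ n / ((i:ℕ).factorial : ℝ) := by
        rw [div_mul_eq_mul_div, ← pow_succ]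
        congr 2
        omega
end
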